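/- arXiv:2412.15608 — 2 statements merged into one kernel-verified Lean document; each statement's English description precedes it below -/
import Mathlib

section
/- Let V : D × Ξ → ℝ with D, Ξ nonempty finite sets. The inner-loop procedure, which starting from a nonempty Ξ₀ ⊆ Ξ repeatedly computes λₙ ∈ argmax_λ min_{r ∈ Ξₙ} V(λ, r), rₙ ∈ argmin_r V(λₙ, r), and sets Ξₙ₊₁ = Ξₙ ∪ {rₙ}, terminates with min_{r ∈ Ξₙ} V(λₙ, r) = max_λ min_{r ∈ Ξ} V(λ, r) after at most |Ξ| iterations. -/
/-- Proposition 1: the inner column-and-constraint generation loop terminates,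
within at most `|Ξ|` iterations, at an iterate where the relaxed value
`min_{r ∈ Ξₙ} V(λₙ, r)` equals the exact max-min value
`max_{λ ∈ D} min_{r ∈ Ξ} V(λ, r)`; termination means the newly generated point
`rₙ` already lies in `Ξₙ` (or `Ξₙ = Ξ`). -/
theorem stmt_10 {Λ R : Type*} [DecidableEq R] (D : Finset Λ) (Ξ : Finset R)
    (hD : D.Nonempty) (hΞ : Ξ.Nonempty) (V : Λ → R → ℝ)
    (Ξseq : ℕ → Finset R) (lam : ℕ → Λ) (r : ℕ → R)
    (hsub0 : Ξseq 0 ⊆ Ξ) (hne : ∀ n, (Ξseq n).Nonempty)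
    (hstep : ∀ n, Ξseq (n + 1) = Ξseq n ∪ {r n})
    (hlam : ∀ n, lam n ∈ D ∧
      (Ξseq n).inf' (hne n) (V (lam n))
        = D.sup' hD (fun l => (Ξseq n).inf' (hne n) (V l)))
    (hr : ∀ n, r n ∈ Ξ ∧ V (lam n) (r n) = Ξ.inf' hΞ (V (lam n))) :
    ∃ n ≤ Ξ.card, (r n ∈ Ξseq n ∨ Ξseq n = Ξ) ∧
      (Ξseq n).inf' (hne n) (V (lam n))
        = D.sup' hD (fun l => Ξ.inf' hΞ (V l)) := by
  have hsub : ∀ n, Ξseq n ⊆ Ξ := by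
    intro n
    induction n with
    | zero => exact hsub0
    | succ n ih =>
      rw [hstep n]
      exact Finset.union_subset ih (Finset.singleton_subset_iff.2 (hr n).1)
  have key : ∃ n ≤ Ξ.card, r n ∈ Ξseq n := by
    by_contra h
    push_neg at h
    have hcard : ∀ n ≤ Ξ.card, n + 1 ≤ (Ξseq n).card := by
      intro n hn
      induction n with
      | zero => exact (hne 0).card_pos
      | succ n ih =>
        have h1 := ih (Nat.le_of_succ_le hn)
        have h2 : r n ∉ Ξseq n := h n (Nat.le_of_succ_le hn)
        rw [hstep n, Finset.union_comm, ← Finset.insert_eq,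
          Finset.card_insert_of_notMem h2]
        omega
    have h3 := hcard Ξ.card le_rfl
    have h4 := Finset.card_le_card (hsub Ξ.card)
    omega
  obtain ⟨n, hn, hrn⟩ := key
  refine ⟨n, hn, Or.inl hrn, ?_⟩
  have hmono : ∀ l, Ξ.inf' hΞ (V l) ≤ (Ξseq n).inf' (hne n) (V l) := by
    intro l
    apply Finset.le_inf'
    intro b hb
    exact Finset.inf'_le _ (hsub n hb)
  have hinf_eq : (Ξseq n).inf' (hne n) (V (lam n)) = Ξ.inf' hΞ (V (lam n)) := by
    refine le_antisymm ?_ (hmono _)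
    calc (Ξseq n).inf' (hne n) (V (lam n)) ≤ V (lam n) (r n) := Finset.inf'_le _ hrn
      _ = Ξ.inf' hΞ (V (lam n)) := (hr n).2
  apply le_antisymm
  · rw [hinf_eq]
    exact Finset.le_sup' (fun l => Ξ.inf' hΞ (V l)) (hlam n).1
  · rw [(hlam n).2]
    apply Finset.sup'_le
    intro l hl
    exact le_trans (hmono l) (Finset.le_sup' (fun l => (Ξseq n).inf' (hne n) (V l)) hl)
end

section
/- Let OPT = min_{s ∈ S} [c(s) + max_{λ ∈ D} Q(s, λ)] with S, D nonempty finite sets and Q : S × D → ℝ. The outer loop that maintains D' ⊆ D, computes s* ∈ argmin_{s} [c(s) + max_{λ ∈ D'} Q(s, λ)] (with max over empty D' taken as 0 ≤ min Q values appropriately, or D' initialized nonempty), then λ* ∈ argmax_{λ ∈ D} Q(s*, λ), and adds λ* to D', terminates with the relaxed value equal to OPT after at most |D| iterations, where termination occurs when λ* ∈ D'. -/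
/-- Proposition 2: the outer column-and-constraint generation loop of the ROD
algorithm terminates, within at most `|D|` iterations, at an iterate where the
scenario produced by the subproblem repeats (`λₙ ∈ Dₙ`) and the relaxed master
value equals the exact robust optimum `OPT`. -/
theorem stmt_19 {S Λ : Type*} [Fintype S] [Nonempty S] [DecidableEq Λ]
    (D : Finset Λ) (hD : D.Nonempty) (c : S → ℝ) (Q : S → Λ → ℝ)
    (Dseq : ℕ → Finset Λ) (s : ℕ → S) (lam : ℕ → Λ)
    (hsub0 : Dseq 0 ⊆ D) (hne : ∀ n, (Dseq n).Nonempty)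
    (hstep : ∀ n, Dseq (n + 1) = Dseq n ∪ {lam n})
    (hs : ∀ n, ∀ s' : S,
      c (s n) + (Dseq n).sup' (hne n) (Q (s n))
        ≤ c s' + (Dseq n).sup' (hne n) (Q s'))
    (hlam : ∀ n, lam n ∈ D ∧
      Q (s n) (lam n) = D.sup' hD (Q (s n))) :
    ∃ n ≤ D.card, lam n ∈ Dseq n ∧
      c (s n) + (Dseq n).sup' (hne n) (Q (s n))
        = Finset.univ.inf' Finset.univ_nonempty
            (fun s' => c s' + D.sup' hD (Q s')) := by
  have hsub : ∀ n, Dseq n ⊆ D := by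
    intro n
    induction n with
    | zero => exact hsub0
    | succ k ih =>
      rw [hstep k]
      exact Finset.union_subset ih (Finset.singleton_subset_iff.mpr (hlam k).1)
  have key : ∃ n ≤ D.card, lam n ∈ Dseq n := by
    by_contra h
    push_neg at h
    have hcard : ∀ n, n ≤ D.card → n + 1 ≤ (Dseq n).card := by
      intro n
      induction n with
      | zero => exact fun _ => Finset.card_pos.mpr (hne 0)
      | succ k ih =>
        intro hn
        have hk : k ≤ D.card := le_of_lt (Nat.lt_of_succ_le hn)
        have h1 := ih hk
        have hnot := h k hk
        rw [hstep k, Finset.union_comm, show {lam k} ∪ Dseq k = insert (lam k) (Dseq k) from rfl,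
          Finset.card_insert_of_notMem hnot]
        omega
    have h1 := hcard D.card le_rfl
    have h2 := Finset.card_le_card (hsub D.card)
    omega
  obtain ⟨n, hn, hmem⟩ := key
  refine ⟨n, hn, hmem, ?_⟩
  have hsupeq : (Dseq n).sup' (hne n) (Q (s n)) = D.sup' hD (Q (s n)) := by
    apply le_antisymm
    · exact Finset.sup'_le _ _ fun b hb => Finset.le_sup' _ (hsub n hb)
    · rw [← (hlam n).2]
      exact Finset.le_sup' _ hmem
  apply le_antisymm
  · apply Finset.le_inf'
    intro s' _
    calc c (s n) + (Dseq n).sup' (hne n) (Q (s n))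
        ≤ c s' + (Dseq n).sup' (hne n) (Q s') := hs n s'
      _ ≤ c s' + D.sup' hD (Q s') :=
        add_le_add le_rfl (Finset.sup'_le _ _ fun b hb => Finset.le_sup' _ (hsub n hb))
  · rw [hsupeq]
    exact Finset.inf'_le _ (Finset.mem_univ (s n))
end
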